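/- Let κ ∈ ℂ with κ ≠ 0, κ ≠ 1, κ ≠ −1, set t = κ + κ⁻¹, and let ε ∈ {1, −1}. Let a = [[κ, 0], [0, κ⁻¹]] and b = [[κ^ε, 1], [0, κ^(−ε)]], viewed as elements of SL(2,ℂ). Let a₂, a₃ ∈ ℂ with a₂ ≠ 2 and a₂ ≠ t² − 2. If a₃ ≠ ε·a₂ + (1−ε)·t²/2, then there exists a unique x ∈ SL(2,ℂ) with tr(x) = t, tr(ax) = a₂, and tr(bx) = a₃; if a₃ = ε·a₂ + (1−ε)·t²/2, then no such x exists. -/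

import Mathlib

/-- The trace of an element of SL(2,ℂ). -/
noncomputable def trSL (A : Matrix.SpecialLinearGroup (Fin 2) ℂ) : ℂ :=
  Matrix.trace (A : Matrix (Fin 2) (Fin 2) ℂ)

/-- The key case in the proof of Lemma 3.1: with `a = d(κ)` and `b = u(κ^ε)`
(`κ ≠ 0, ±1`, `t = κ + κ⁻¹`, `ε = ±1`) and `a₂ ∈ B_t`, there is a unique
`x ∈ SL(2,ℂ)` with `tr(x) = t`, `tr(ax) = a₂`, `tr(bx) = a₃` when
`a₃ ≠ ε a₂ + (1-ε) t²/2`, and no such `x` otherwise. -/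
lemma aux_case
    (κ : ℂ) (h0 : κ ≠ 0) (hδ : κ - κ⁻¹ ≠ 0)
    (t : ℂ) (ht : t = κ + κ⁻¹)
    (u : ℂ) (hu : u = κ ∨ u = κ⁻¹)
    (a b : Matrix.SpecialLinearGroup (Fin 2) ℂ)
    (ha : (a : Matrix (Fin 2) (Fin 2) ℂ) = !![κ, 0; 0, κ⁻¹])
    (hb : (b : Matrix (Fin 2) (Fin 2) ℂ) = !![u, 1; 0, u⁻¹])
    (a₂ a₃ c : ℂ) (ha₂ : a₂ ≠ 2) (ha₂' : a₂ ≠ t ^ 2 - 2)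
    (hc : c = u * ((a₂ - κ⁻¹ * t) / (κ - κ⁻¹)) + u⁻¹ * ((κ * t - a₂) / (κ - κ⁻¹))) :
    (a₃ ≠ c →
      ∃! x : Matrix.SpecialLinearGroup (Fin 2) ℂ,
        trSL x = t ∧ trSL (a * x) = a₂ ∧ trSL (b * x) = a₃) ∧
    (a₃ = c →
      ¬ ∃ x : Matrix.SpecialLinearGroup (Fin 2) ℂ,
        trSL x = t ∧ trSL (a * x) = a₂ ∧ trSL (b * x) = a₃) := by
  have hu0 : u ≠ 0 := by rcases hu with rfl | rfl <;> simp [h0]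
  have hδ2 : κ ^ 2 - 1 ≠ 0 := by
    intro h
    apply hδ
    field_simp
    linear_combination h
  set p : ℂ := (a₂ - κ⁻¹ * t) / (κ - κ⁻¹) with hp
  set s : ℂ := (κ * t - a₂) / (κ - κ⁻¹) with hs
  have hκ : κ * κ⁻¹ = 1 := mul_inv_cancel₀ h0
  have hps : p + s = t := by
    rw [hp, hs, ← add_div, div_eq_iff hδ]; ring
  have has : κ * p + κ⁻¹ * s = a₂ := by
    rw [hp, hs, ← mul_div_assoc, ← mul_div_assoc, ← add_div, div_eq_iff hδ]; ring
  have hps1 : p * s - 1 ≠ 0 := by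
    have hpsm : p * s = ((a₂ - κ⁻¹ * t) * (κ * t - a₂)) / ((κ - κ⁻¹) * (κ - κ⁻¹)) := by
      rw [hp, hs, div_mul_div_comm]
    have key : (p * s - 1) * (κ - κ⁻¹) ^ 2 = -((a₂ - 2) * (a₂ - (t ^ 2 - 2))) := by
      rw [sub_mul, hpsm, sq, div_mul_cancel₀ _ (mul_ne_zero hδ hδ), one_mul]
      subst ht
      linear_combination (-2 * κ * κ⁻¹ + 4 - κ ^ 2 - κ⁻¹ ^ 2) * hκ
    intro h
    rw [h, zero_mul] at key
    have h2 : a₂ - 2 ≠ 0 := sub_ne_zero.mpr ha₂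
    have h3 : a₂ - (t ^ 2 - 2) ≠ 0 := sub_ne_zero.mpr ha₂'
    exact (mul_ne_zero h2 h3) (neg_eq_zero.mp key.symm)
  have char : ∀ y : Matrix.SpecialLinearGroup (Fin 2) ℂ,
      (trSL y = t ∧ trSL (a * y) = a₂ ∧ trSL (b * y) = a₃) ↔
      ((y : Matrix (Fin 2) (Fin 2) ℂ) 0 0 = p ∧ (y : Matrix (Fin 2) (Fin 2) ℂ) 1 1 = s ∧
       (y : Matrix (Fin 2) (Fin 2) ℂ) 1 0 = a₃ - c) := by
    intro y
    have e1 : trSL y = (y : Matrix (Fin 2) (Fin 2) ℂ) 0 0 + (y : Matrix (Fin 2) (Fin 2) ℂ) 1 1 := by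
      simp [trSL, Matrix.trace_fin_two]
    have e2 : trSL (a * y) = κ * (y : Matrix (Fin 2) (Fin 2) ℂ) 0 0 + κ⁻¹ * (y : Matrix (Fin 2) (Fin 2) ℂ) 1 1 := by
      simp [trSL, ha, Matrix.trace_fin_two, Matrix.mul_apply, Matrix.vecMul,
        dotProduct, Fin.sum_univ_two]
    have e3 : trSL (b * y) = u * (y : Matrix (Fin 2) (Fin 2) ℂ) 0 0 +
        (y : Matrix (Fin 2) (Fin 2) ℂ) 1 0 + u⁻¹ * (y : Matrix (Fin 2) (Fin 2) ℂ) 1 1 := by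
      simp [trSL, hb, Matrix.trace_fin_two, Matrix.mul_apply, Matrix.vecMul,
        dotProduct, Fin.sum_univ_two]
    rw [e1, e2, e3]
    constructor
    · rintro ⟨k1, k2, k3⟩
      have hy00 : (y : Matrix (Fin 2) (Fin 2) ℂ) 0 0 = p := by
        rw [hp, eq_div_iff hδ]; linear_combination k2 - κ⁻¹ * k1
      have hy11 : (y : Matrix (Fin 2) (Fin 2) ℂ) 1 1 = s := by
        rw [hs, eq_div_iff hδ]; linear_combination κ * k1 - k2
      refine ⟨hy00, hy11, ?_⟩
      rw [hc]
      linear_combination k3 - u * hy00 - u⁻¹ * hy11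
    · rintro ⟨k1, k2, k3⟩
      rw [k1, k2, k3, hc]
      refine ⟨hps, has, by ring⟩
  constructor
  · intro hne
    have hr : a₃ - c ≠ 0 := sub_ne_zero.mpr hne
    have hdetM : Matrix.det !![p, (p * s - 1) / (a₃ - c); a₃ - c, s] = 1 := by
      rw [Matrix.det_fin_two_of, div_mul_cancel₀ _ hr]; ring
    refine ⟨⟨_, hdetM⟩, ?_, ?_⟩
    · exact (char _).mpr ⟨by simp, by simp, by simp⟩
    · intro y hy
      rw [char] at hy
      obtain ⟨k1, k2, k3⟩ := hy
      have hdet := y.prop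
      rw [Matrix.det_fin_two] at hdet
      have hy01 : (y : Matrix (Fin 2) (Fin 2) ℂ) 0 1 = (p * s - 1) / (a₃ - c) := by
        rw [eq_div_iff hr]; rw [k1, k2, k3] at hdet; linear_combination -hdet
      apply Subtype.ext
      ext i j
      fin_cases i <;> fin_cases j <;> simp [k1, k2, k3, hy01]
  · intro heq
    rintro ⟨y, hy⟩
    rw [char] at hy
    obtain ⟨k1, k2, k3⟩ := hy
    have hdet := y.prop
    rw [Matrix.det_fin_two] at hdet
    rw [k1, k2, k3, heq, sub_self, mul_zero, sub_zero] at hdet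
    exact hps1 (by linear_combination hdet)

theorem reducible_noncommuting_case
    (κ : ℂ) (h0 : κ ≠ 0) (h1 : κ ≠ 1) (h2 : κ ≠ -1)
    (t : ℂ) (ht : t = κ + κ⁻¹)
    (ε : ℤ) (hε : ε = 1 ∨ ε = -1)
    (a b : Matrix.SpecialLinearGroup (Fin 2) ℂ)
    (ha : (a : Matrix (Fin 2) (Fin 2) ℂ) = !![κ, 0; 0, κ⁻¹])
    (hb : (b : Matrix (Fin 2) (Fin 2) ℂ) = !![κ ^ ε, 1; 0, κ ^ (-ε)])
    (a₂ a₃ : ℂ) (ha₂ : a₂ ≠ 2) (ha₂' : a₂ ≠ t ^ 2 - 2) :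
    (a₃ ≠ (ε : ℂ) * a₂ + (1 - (ε : ℂ)) * t ^ 2 / 2 →
      ∃! x : Matrix.SpecialLinearGroup (Fin 2) ℂ,
        trSL x = t ∧ trSL (a * x) = a₂ ∧ trSL (b * x) = a₃) ∧
    (a₃ = (ε : ℂ) * a₂ + (1 - (ε : ℂ)) * t ^ 2 / 2 →
      ¬ ∃ x : Matrix.SpecialLinearGroup (Fin 2) ℂ,
        trSL x = t ∧ trSL (a * x) = a₂ ∧ trSL (b * x) = a₃) := by
  have hδ : κ - κ⁻¹ ≠ 0 := by
    intro h
    have hk : κ * κ = 1 := by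
      have h' : κ = κ⁻¹ := by linear_combination h
      field_simp at h'
      linear_combination h'
    have hfac : (κ - 1) * (κ + 1) = 0 := by linear_combination hk
    rcases mul_eq_zero.mp hfac with h' | h'
    · exact h1 (by linear_combination h')
    · exact h2 (by linear_combination h')
  rcases hε with rfl | rfl
  · have hb' : (b : Matrix (Fin 2) (Fin 2) ℂ) = !![κ, 1; 0, κ⁻¹] := by
      simpa using hb
    exact aux_case κ h0 hδ t ht κ (Or.inl rfl) a b ha hb' a₂ a₃ _ ha₂ ha₂'
      (by push_cast
          rw [← mul_div_assoc, ← mul_div_assoc, ← add_div, eq_comm, div_eq_iff hδ]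
          ring)
  · have hb' : (b : Matrix (Fin 2) (Fin 2) ℂ) = !![κ⁻¹, 1; 0, (κ⁻¹)⁻¹] := by
      rw [inv_inv]
      simpa using hb
    exact aux_case κ h0 hδ t ht κ⁻¹ (Or.inr rfl) a b ha hb' a₂ a₃ _ ha₂ ha₂'
      (by push_cast
          rw [inv_inv, ht, ← mul_div_assoc, ← mul_div_assoc, ← add_div, eq_comm,
            div_eq_iff hδ]
          field_simp
          ring)
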